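/- lim_{a→0⁺} ∫₀^∞ sinh(a+t)·(5cosh²(a+t) − cosh²(3a+t)) / (cosh²(a+t)·√(sinh(2t)·sinh³(4a+2t))) dt = ∫₀^∞ dt/(sinh(t)·cosh²(t)) = +∞. -/

import Mathlib

open Real MeasureTheory Filter Set Topology
lemma my_sinh_le_mul_exp {x : ℝ} (hx : 0 ≤ x) : Real.sinh x ≤ x * Real.exp (2*x) := by
  rw [Real.sinh_eq]
  have h1 : -(2*x) + 1 ≤ Real.exp (-(2*x)) := Real.add_one_le_exp _
  have h2 : Real.exp (-(2*x)) * Real.exp (2*x) = 1 := by rw [← Real.exp_add]; simp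
  have h3 : Real.exp (-x) * Real.exp x = 1 := by rw [← Real.exp_add]; simp
  have h4 : Real.exp (-x) ≤ 1 := by
    rw [show (1:ℝ) = Real.exp 0 by simp]; exact Real.exp_le_exp.2 (by linarith)
  have h7 : 1 ≤ Real.exp (2*x) := by
    rw [show (1:ℝ) = Real.exp 0 by simp]; exact Real.exp_le_exp.2 (by linarith)
  have h6 : Real.exp (-x) * Real.exp (2*x) = Real.exp x := by
    rw [← Real.exp_add]; ring_nf
  have key1 : Real.exp (2*x) - 1 ≤ 2*x*Real.exp (2*x) := by
    nlinarith [mul_le_mul_of_nonneg_right h1 (Real.exp_pos (2*x)).le]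
  have key2 : Real.exp x - Real.exp (-x) ≤ Real.exp (2*x) - 1 := by
    nlinarith [mul_le_mul_of_nonneg_right h4 (by linarith : (0:ℝ) ≤ Real.exp (2*x) - 1)]
  linarith

lemma my_cosh_add_le {x y : ℝ} (hy : 0 ≤ y) : Real.cosh (x + y) ≤ Real.cosh x * Real.exp y := by
  rw [Real.cosh_add, ← Real.cosh_add_sinh y]
  have h1 : Real.sinh x ≤ Real.cosh x := (Real.sinh_lt_cosh x).le
  have h2 : 0 ≤ Real.sinh y := Real.sinh_nonneg_iff.2 hy
  have h3 : 0 < Real.cosh x := Real.cosh_pos x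
  nlinarith

lemma my_cosh_le_exp {x : ℝ} (hx : 0 ≤ x) : Real.cosh x ≤ Real.exp x := by
  rw [← Real.cosh_add_sinh x]
  have := Real.sinh_nonneg_iff.2 hx; linarith

lemma my_exp_quarter_le_two : Real.exp (1/4 : ℝ) ≤ 2 := by
  have h : Real.exp ((1/4:ℝ)) ^ (4:ℕ) = Real.exp 1 := by
    rw [← Real.exp_nat_mul]; norm_num
  by_contra hc
  push_neg at hc
  have h2 : (2:ℝ)^(4:ℕ) < Real.exp ((1/4:ℝ)) ^ (4:ℕ) :=
    pow_lt_pow_left₀ hc (by norm_num) (by norm_num)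
  rw [h] at h2
  nlinarith [Real.exp_one_lt_d9]

noncomputable def F (a t : ℝ) : ℝ :=
  Real.sinh (a+t) * (5 * Real.cosh (a+t)^2 - Real.cosh (3*a+t)^2) /
    (Real.cosh (a+t)^2 * Real.sqrt (Real.sinh (2*t) * Real.sinh (4*a+2*t)^3))

lemma my_cosh_add_le' {x y : ℝ} (hy : 0 ≤ y) : Real.cosh (x + y) ≤ Real.cosh x * Real.exp y := by
  rw [Real.cosh_add, ← Real.cosh_add_sinh y]
  have h1 : Real.sinh x ≤ Real.cosh x := (Real.sinh_lt_cosh x).le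
  have h2 : 0 ≤ Real.sinh y := Real.sinh_nonneg_iff.2 hy
  have h3 : 0 < Real.cosh x := Real.cosh_pos x
  nlinarith

lemma P_pos {a t : ℝ} (ha : 0 < a) (ht : 0 < t) :
    0 < Real.sinh (2*t) * Real.sinh (4*a+2*t)^3 := by
  have h1 : 0 < Real.sinh (2*t) := Real.sinh_pos_iff.2 (by linarith)
  have h2 : 0 < Real.sinh (4*a+2*t) := Real.sinh_pos_iff.2 (by linarith)
  positivity

lemma denom_pos {a t : ℝ} (ha : 0 < a) (ht : 0 < t) :
    0 < Real.cosh (a+t)^2 * Real.sqrt (Real.sinh (2*t) * Real.sinh (4*a+2*t)^3) := by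
  have := P_pos ha ht
  have h2 := Real.sqrt_pos.2 this
  have h3 := Real.cosh_pos (a+t)
  positivity

lemma num_lb {a t : ℝ} (ha : 0 < a) (ha' : a ≤ 1/4) (ht : 0 < t) :
    2 * (Real.cosh (a+t)^2 * Real.sinh (a+t)) ≤
      Real.sinh (a+t) * (5 * Real.cosh (a+t)^2 - Real.cosh (3*a+t)^2) := by
  have h1 : Real.cosh (3*a+t) ≤ Real.cosh (a+t) * Real.exp (2*a) := by
    have h := my_cosh_add_le' (x := a+t) (y := 2*a) (by linarith)
    calc Real.cosh (3*a+t) = Real.cosh ((a+t) + 2*a) := by ring_nf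
    _ ≤ _ := h
  have h2 : Real.exp (2*a) * Real.exp (2*a) = Real.exp (4*a) := by
    rw [← Real.exp_add]; ring_nf
  have h3 : Real.exp (4*a) ≤ Real.exp 1 := Real.exp_le_exp.2 (by linarith)
  have h4 : Real.exp 1 < 2.7182818286 := Real.exp_one_lt_d9
  have h5 : 0 < Real.cosh (a+t) := Real.cosh_pos _
  have h6 : 0 < Real.sinh (a+t) := Real.sinh_pos_iff.2 (by linarith)
  have h7 : 0 < Real.cosh (3*a+t) := Real.cosh_pos _
  have h8 : Real.cosh (3*a+t)^2 ≤ Real.cosh (a+t)^2 * Real.exp (4*a) := by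
    calc Real.cosh (3*a+t)^2 ≤ (Real.cosh (a+t) * Real.exp (2*a))^2 := by
          apply pow_le_pow_left₀ h7.le h1 2
    _ = Real.cosh (a+t)^2 * Real.exp (4*a) := by rw [← h2]; ring
  have h9 : Real.exp (4*a) ≤ 3 := by linarith
  have h10 : Real.cosh (3*a+t)^2 ≤ 3 * Real.cosh (a+t)^2 := by
    nlinarith [sq_nonneg (Real.cosh (a+t))]
  nlinarith [mul_nonneg h6.le (sub_nonneg.2 h10)]

lemma F_nonneg {a t : ℝ} (ha : 0 < a) (ha' : a ≤ 1/4) (ht : 0 < t) : 0 ≤ F a t := by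
  have h1 := num_lb ha ha' ht
  have h2 := denom_pos ha ht
  have h5 : 0 < Real.cosh (a+t) := Real.cosh_pos _
  have h6 : 0 < Real.sinh (a+t) := Real.sinh_pos_iff.2 (by linarith)
  apply div_nonneg _ h2.le
  nlinarith

lemma F_contOn {a : ℝ} (ha : 0 < a) : ContinuousOn (F a) (Ioi 0) := by
  apply ContinuousOn.div
  · fun_prop
  · fun_prop
  · intro t ht
    exact (denom_pos ha ht).ne'

lemma F_lb {a t : ℝ} (ha : 0 < a) (ha' : a ≤ 1/4) (hat : a < t) (ht1 : t < 1) :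
    (2 / Real.sqrt (432 * Real.exp 40)) / t ≤ F a t := by
  have ht : 0 < t := lt_trans ha hat
  set C := Real.sqrt (432 * Real.exp 40) with hC
  have hCpos : 0 < C := Real.sqrt_pos.2 (by positivity)
  have hD := denom_pos ha ht
  have hs2t : Real.sinh (2*t) ≤ 2*t*Real.exp 4 := by
    calc Real.sinh (2*t) ≤ (2*t) * Real.exp (2*(2*t)) := my_sinh_le_mul_exp (by linarith)
    _ ≤ 2*t*Real.exp 4 := by
        have : Real.exp (2*(2*t)) ≤ Real.exp 4 := Real.exp_le_exp.2 (by linarith)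
        nlinarith
  have hs6t : Real.sinh (4*a+2*t) ≤ 6*t*Real.exp 12 := by
    calc Real.sinh (4*a+2*t) ≤ Real.sinh (6*t) := Real.sinh_le_sinh.2 (by linarith)
    _ ≤ (6*t) * Real.exp (2*(6*t)) := my_sinh_le_mul_exp (by linarith)
    _ ≤ 6*t*Real.exp 12 := by
        have : Real.exp (2*(6*t)) ≤ Real.exp 12 := Real.exp_le_exp.2 (by linarith)
        nlinarith
  have hsinh6pos : 0 ≤ Real.sinh (4*a+2*t) := (Real.sinh_pos_iff.2 (by linarith)).le
  have hexp : Real.exp 4 * Real.exp 12 ^ 3 = Real.exp 40 := by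
    rw [show Real.exp 12 ^ 3 = Real.exp 36 by rw [← Real.exp_nat_mul]; norm_num, ← Real.exp_add]
    norm_num
  have hub : Real.sinh (2*t) * Real.sinh (4*a+2*t)^3 ≤ 432 * t^4 * Real.exp 40 := by
    have h1 : Real.sinh (4*a+2*t)^3 ≤ (6*t*Real.exp 12)^3 := pow_le_pow_left₀ hsinh6pos hs6t 3
    have h2 : Real.sinh (2*t) * Real.sinh (4*a+2*t)^3 ≤ (2*t*Real.exp 4) * (6*t*Real.exp 12)^3 := by
      apply mul_le_mul hs2t h1 (by positivity) (by positivity)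
    calc Real.sinh (2*t) * Real.sinh (4*a+2*t)^3 ≤ (2*t*Real.exp 4) * (6*t*Real.exp 12)^3 := h2
    _ = 432 * t^4 * (Real.exp 4 * Real.exp 12^3) := by ring
    _ = 432 * t^4 * Real.exp 40 := by rw [hexp]
  have hsqrtP : Real.sqrt (Real.sinh (2*t) * Real.sinh (4*a+2*t)^3) ≤ t^2 * C := by
    calc Real.sqrt (Real.sinh (2*t) * Real.sinh (4*a+2*t)^3)
        ≤ Real.sqrt (432 * t^4 * Real.exp 40) := Real.sqrt_le_sqrt hub
    _ = t^2 * C := by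
        rw [show 432 * t^4 * Real.exp 40 = (t^2)^2 * (432 * Real.exp 40) by ring,
          Real.sqrt_mul (sq_nonneg _), Real.sqrt_sq (sq_nonneg t)]
  have hnum := num_lb ha ha' ht
  have hsinh : t ≤ Real.sinh (a+t) := by
    have := Real.self_le_sinh_iff.2 (by linarith : (0:ℝ) ≤ a + t)
    linarith
  rw [F, div_le_div_iff₀ ht hD]
  set ch := Real.cosh (a+t) with hch
  have hcosh : 0 < ch := Real.cosh_pos _
  set sP := Real.sqrt (Real.sinh (2*t) * Real.sinh (4*a+2*t)^3) with hsP
  have h1 : (2/C) * (ch^2 * sP) ≤ (2/C) * (ch^2 * (t^2*C)) := by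
    apply mul_le_mul_of_nonneg_left (mul_le_mul_of_nonneg_left hsqrtP (sq_nonneg _))
    positivity
  have h2 : (2/C) * (ch^2 * (t^2*C)) = 2*(ch^2*t^2) := by
    field_simp
  have h3 : 2*(ch^2*t^2) ≤ 2*(ch^2*Real.sinh (a+t))*t := by
    nlinarith [mul_le_mul_of_nonneg_left hsinh (by positivity : (0:ℝ) ≤ 2*ch^2*t)]
  have h4 : 2*(ch^2*Real.sinh (a+t))*t ≤
      Real.sinh (a+t) * (5 * ch^2 - Real.cosh (3*a+t)^2) * t :=
    mul_le_mul_of_nonneg_right hnum ht.le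
  linarith

lemma F_ub1 {a t : ℝ} (ha : 0 < a) (ha' : a ≤ 1/4) (ht : 0 < t) (ht1 : t ≤ 1) :
    F a t ≤ (5 * Real.cosh 2 / Real.sqrt (2 * Real.sinh (4*a)^3)) * (1 / Real.sqrt t) := by
  have hD := denom_pos ha ht
  have hsinh4a : 0 < Real.sinh (4*a) := Real.sinh_pos_iff.2 (by linarith)
  have hK : 0 < Real.sqrt (2 * Real.sinh (4*a)^3) := Real.sqrt_pos.2 (by positivity)
  have hcosh : 0 < Real.cosh (a+t) := Real.cosh_pos _
  have hsinhat : 0 < Real.sinh (a+t) := Real.sinh_pos_iff.2 (by linarith)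
  rw [F, div_le_iff₀ hD]
  -- numerator ≤ 5 cosh(a+t) * cosh(a+t)^2
  have hnumub : Real.sinh (a+t) * (5 * Real.cosh (a+t)^2 - Real.cosh (3*a+t)^2) ≤
      5 * Real.cosh (a+t) * Real.cosh (a+t)^2 := by
    have h1 : Real.sinh (a+t) ≤ Real.cosh (a+t) := (Real.sinh_lt_cosh _).le
    have h2 : 0 ≤ Real.cosh (3*a+t)^2 := sq_nonneg _
    nlinarith [sq_nonneg (Real.cosh (a+t))]
  -- sqrt lower bound
  have hPlb : Real.sqrt t * Real.sqrt (2 * Real.sinh (4*a)^3) ≤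
      Real.sqrt (Real.sinh (2*t) * Real.sinh (4*a+2*t)^3) := by
    rw [← Real.sqrt_mul ht.le]
    apply Real.sqrt_le_sqrt
    have h1 : 2*t ≤ Real.sinh (2*t) := Real.self_le_sinh_iff.2 (by linarith)
    have h2 : Real.sinh (4*a) ≤ Real.sinh (4*a+2*t) := Real.sinh_le_sinh.2 (by linarith)
    have h3 : Real.sinh (4*a)^3 ≤ Real.sinh (4*a+2*t)^3 := pow_le_pow_left₀ hsinh4a.le h2 3
    nlinarith [mul_le_mul h1 h3 (by positivity) (by linarith : (0:ℝ) ≤ Real.sinh (2*t))]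
  have hcosh2 : Real.cosh (a+t) ≤ Real.cosh 2 := by
    rw [Real.cosh_le_cosh]
    rw [abs_of_pos (by linarith : (0:ℝ) < a+t), abs_of_pos (by norm_num : (0:ℝ) < 2)]
    linarith
  have hst : 0 < Real.sqrt t := Real.sqrt_pos.2 ht
  -- goal: N ≤ K * (1/√t) * (cosh² * √P)
  calc Real.sinh (a+t) * (5 * Real.cosh (a+t)^2 - Real.cosh (3*a+t)^2)
      ≤ 5 * Real.cosh (a+t) * Real.cosh (a+t)^2 := hnumub
    _ ≤ 5 * Real.cosh 2 * Real.cosh (a+t)^2 := by nlinarith [sq_nonneg (Real.cosh (a+t))]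
    _ = (5 * Real.cosh 2 / Real.sqrt (2 * Real.sinh (4*a)^3)) * (1/Real.sqrt t) *
        (Real.cosh (a+t)^2 * (Real.sqrt t * Real.sqrt (2 * Real.sinh (4*a)^3))) := by
        field_simp
    _ ≤ (5 * Real.cosh 2 / Real.sqrt (2 * Real.sinh (4*a)^3)) * (1/Real.sqrt t) *
        (Real.cosh (a+t)^2 * Real.sqrt (Real.sinh (2*t) * Real.sinh (4*a+2*t)^3)) := by
        apply mul_le_mul_of_nonneg_left (mul_le_mul_of_nonneg_left hPlb (sq_nonneg _))
        positivity

lemma F_ub2 {a t : ℝ} (ha : 0 < a) (ha' : a ≤ 1/4) (ht : 1 < t) :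
    F a t ≤ 160 * Real.exp (-3*t) := by
  have ht0 : 0 < t := by linarith
  have hD := denom_pos ha ht0
  have hcosh : 0 < Real.cosh (a+t) := Real.cosh_pos _
  rw [F, div_le_iff₀ hD]
  have hnumub : Real.sinh (a+t) * (5 * Real.cosh (a+t)^2 - Real.cosh (3*a+t)^2) ≤
      5 * Real.cosh (a+t) * Real.cosh (a+t)^2 := by
    have h1 : Real.sinh (a+t) ≤ Real.cosh (a+t) := (Real.sinh_lt_cosh _).le
    have hsinhat : 0 < Real.sinh (a+t) := Real.sinh_pos_iff.2 (by linarith)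
    nlinarith [sq_nonneg (Real.cosh (3*a+t))]
  -- cosh(a+t) ≤ 2 exp t
  have hcoshub : Real.cosh (a+t) ≤ 2 * Real.exp t := by
    calc Real.cosh (a+t) ≤ Real.exp (a+t) := my_cosh_le_exp (by linarith)
    _ = Real.exp a * Real.exp t := by rw [← Real.exp_add]
    _ ≤ 2 * Real.exp t := by
        have h1 : Real.exp a ≤ Real.exp (1/4) := Real.exp_le_exp.2 ha'
        have := my_exp_quarter_le_two
        nlinarith [Real.exp_pos t]
  -- sinh 2t ≥ exp(2t)/4
  have hsinh2t : Real.exp (2*t) / 4 ≤ Real.sinh (2*t) := by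
    rw [Real.sinh_eq]
    have h1 : Real.exp (-(2*t)) ≤ 1 := by
      rw [show (1:ℝ) = Real.exp 0 by simp]; exact Real.exp_le_exp.2 (by linarith)
    have h2 : Real.exp 2 ≤ Real.exp (2*t) := Real.exp_le_exp.2 (by linarith)
    have h3 : (2:ℝ) ≤ Real.exp 2 := by
      nlinarith [Real.add_one_le_exp (1:ℝ), Real.exp_pos 1,
        (by rw [← Real.exp_add]; norm_num : Real.exp 1 * Real.exp 1 = Real.exp 2)]
    linarith
  -- sqrt P ≥ sinh(2t)^2 ≥ exp(4t)/16
  have hPlb : Real.exp (4*t) / 16 ≤ Real.sqrt (Real.sinh (2*t) * Real.sinh (4*a+2*t)^3) := by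
    have hs2 : 0 < Real.sinh (2*t) := Real.sinh_pos_iff.2 (by linarith)
    have h2 : Real.sinh (2*t) ≤ Real.sinh (4*a+2*t) := Real.sinh_le_sinh.2 (by linarith)
    have h3 : Real.sinh (2*t)^4 ≤ Real.sinh (2*t) * Real.sinh (4*a+2*t)^3 := by
      nlinarith [pow_le_pow_left₀ hs2.le h2 3]
    calc Real.exp (4*t)/16 = (Real.exp (2*t)/4)^2 := by
          rw [div_pow, ← Real.exp_nat_mul]; norm_num; ring_nf
      _ ≤ Real.sinh (2*t)^2 := by nlinarith [Real.exp_pos (2*t)]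
      _ = Real.sqrt ((Real.sinh (2*t)^2)^2) := (Real.sqrt_sq (sq_nonneg _)).symm
      _ = Real.sqrt (Real.sinh (2*t)^4) := by norm_num [← pow_mul]
      _ ≤ _ := Real.sqrt_le_sqrt h3
  have hexp3 : Real.exp (-3*t) * Real.exp (4*t) = Real.exp t := by
    rw [← Real.exp_add]; ring_nf
  have hch1 : 1 ≤ Real.cosh (a+t) := Real.one_le_cosh _
  calc Real.sinh (a+t) * (5 * Real.cosh (a+t)^2 - Real.cosh (3*a+t)^2)
      ≤ 5 * Real.cosh (a+t) * Real.cosh (a+t)^2 := hnumub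
    _ ≤ 5 * (2*Real.exp t) * Real.cosh (a+t)^2 := by nlinarith [sq_nonneg (Real.cosh (a+t))]
    _ = 160 * Real.exp (-3*t) * (Real.cosh (a+t)^2 * (Real.exp (4*t)/16)) := by
        rw [← hexp3]; ring
    _ ≤ 160 * Real.exp (-3*t) * (Real.cosh (a+t)^2 * Real.sqrt (Real.sinh (2*t) * Real.sinh (4*a+2*t)^3)) := by
        apply mul_le_mul_of_nonneg_left (mul_le_mul_of_nonneg_left hPlb (sq_nonneg _))
        positivity

lemma integrableOn_one_div_sqrt : IntegrableOn (fun t : ℝ => 1 / Real.sqrt t) (Ioc (0:ℝ) 1) := by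
  have h : IntervalIntegrable (fun t : ℝ => t ^ (-(1/2) : ℝ)) volume 0 1 :=
    intervalIntegral.intervalIntegrable_rpow' (by norm_num)
  have h2 := (intervalIntegrable_iff_integrableOn_Ioc_of_le (by norm_num : (0:ℝ) ≤ 1)).mp h
  apply h2.congr_fun _ measurableSet_Ioc
  intro x hx
  show x ^ (-(1/2) : ℝ) = 1 / Real.sqrt x
  rw [Real.rpow_neg hx.1.le, Real.sqrt_eq_rpow, one_div]
  norm_num

lemma F_integrableOn {a : ℝ} (ha : 0 < a) (ha' : a ≤ 1/4) :
    IntegrableOn (F a) (Ioi (0:ℝ)) := by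
  rw [show Ioi (0:ℝ) = Ioc 0 1 ∪ Ioi 1 from (Ioc_union_Ioi_eq_Ioi (by norm_num)).symm]
  apply MeasureTheory.IntegrableOn.union
  · apply Integrable.mono'
      (integrableOn_one_div_sqrt.const_mul (5 * Real.cosh 2 / Real.sqrt (2 * Real.sinh (4*a)^3)))
    · exact ((F_contOn ha).mono Ioc_subset_Ioi_self).aestronglyMeasurable measurableSet_Ioc
    · rw [ae_restrict_iff' measurableSet_Ioc]
      filter_upwards with t ht
      rw [Real.norm_eq_abs, abs_of_nonneg (F_nonneg ha ha' ht.1)]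
      exact F_ub1 ha ha' ht.1 ht.2
  · apply Integrable.mono'
      ((exp_neg_integrableOn_Ioi 1 (by norm_num : (0:ℝ) < 3)).const_mul 160)
    · exact ((F_contOn ha).mono (Ioi_subset_Ioi (by norm_num))).aestronglyMeasurable
        measurableSet_Ioi
    · rw [ae_restrict_iff' measurableSet_Ioi]
      filter_upwards with t ht
      rw [Real.norm_eq_abs, abs_of_nonneg (F_nonneg ha ha' (by linarith [mem_Ioi.mp ht]))]
      exact F_ub2 ha ha' ht

lemma integral_key {a : ℝ} (ha : 0 < a) (ha4 : a < 1/4) :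
    (-(2 / Real.sqrt (432 * Real.exp 40))) * Real.log a ≤ ∫ t in Ioi (0:ℝ), F a t := by
  set c := 2 / Real.sqrt (432 * Real.exp 40) with hc
  have hcpos : 0 < c := by
    rw [hc]
    have : (0:ℝ) < Real.sqrt (432 * Real.exp 40) := Real.sqrt_pos.2 (by positivity)
    positivity
  have ha' : a ≤ 1/4 := ha4.le
  have ha1 : a < 1 := by linarith
  have hInt := F_integrableOn ha ha'
  have hnn : 0 ≤ᵐ[volume.restrict (Ioi (0:ℝ))] F a := by
    filter_upwards [ae_restrict_mem measurableSet_Ioi] with t ht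
    exact F_nonneg ha ha' ht
  have hsub : Ioo a 1 ⊆ Ioi (0:ℝ) := fun x hx => lt_trans ha hx.1
  have step1 : ∫ t in Ioo a 1, F a t ≤ ∫ t in Ioi (0:ℝ), F a t :=
    setIntegral_mono_set hInt hnn (HasSubset.Subset.eventuallyLE hsub)
  have hg : IntegrableOn (fun t : ℝ => c / t) (Ioo a 1) := by
    apply IntegrableOn.mono_set _ Ioo_subset_Icc_self
    apply ContinuousOn.integrableOn_compact isCompact_Icc
    exact continuousOn_const.div continuousOn_id
      (fun x hx => ne_of_gt (lt_of_lt_of_le ha hx.1))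
  have step2 : ∫ t in Ioo a 1, c / t ≤ ∫ t in Ioo a 1, F a t :=
    setIntegral_mono_on hg (hInt.mono_set hsub) measurableSet_Ioo
      (fun t ht => F_lb ha ha' ht.1 ht.2)
  have h0notin : (0:ℝ) ∉ Set.uIcc a 1 := by
    rw [Set.uIcc_of_le ha1.le]
    intro h
    exact absurd h.1 (by linarith)
  have step3 : ∫ t in Ioo a 1, c / t = c * Real.log a⁻¹ := by
    rw [← integral_Ioc_eq_integral_Ioo, ← intervalIntegral.integral_of_le ha1.le]
    simp_rw [div_eq_mul_inv]
    rw [intervalIntegral.integral_const_mul, integral_inv h0notin, one_div]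
  have : -c * Real.log a = c * Real.log a⁻¹ := by rw [Real.log_inv]; ring
  linarith [step2, step1, this ▸ step3]

theorem varrho_deriv_tendsto_atTop :
    Tendsto (fun a : ℝ => ∫ t in Set.Ioi (0:ℝ),
        Real.sinh (a+t) * (5 * Real.cosh (a+t)^2 - Real.cosh (3*a+t)^2) /
          (Real.cosh (a+t)^2 * Real.sqrt (Real.sinh (2*t) * Real.sinh (4*a+2*t)^3)))
      (nhdsWithin 0 (Set.Ioi 0)) atTop ∧
    ∫⁻ t in Set.Ioi (0:ℝ),
      ENNReal.ofReal (1 / (Real.sinh t * Real.cosh t ^ 2)) = ⊤ := by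
  constructor
  · show Tendsto (fun a : ℝ => ∫ t in Set.Ioi (0:ℝ), F a t) (𝓝[>] 0) atTop
    set c := 2 / Real.sqrt (432 * Real.exp 40) with hc
    have hcpos : 0 < c := by
      rw [hc]
      have : (0:ℝ) < Real.sqrt (432 * Real.exp 40) := Real.sqrt_pos.2 (by positivity)
      positivity
    apply tendsto_atTop_mono' (𝓝[>] (0:ℝ))
      (f₁ := fun a : ℝ => (-c) * Real.log a)
    · filter_upwards [Ioo_mem_nhdsGT (by norm_num : (0:ℝ) < 1/4)] with a ha
      exact integral_key ha.1 ha.2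
    · exact Tendsto.const_mul_atBot_of_neg (by linarith) Real.tendsto_log_nhdsGT_zero
  · -- Part 2
    rw [← top_le_iff]
    have hg_meas : Measurable fun t : ℝ =>
        ENNReal.ofReal (1 / (Real.sinh t * Real.cosh t ^ 2)) := by
      apply Measurable.ennreal_ofReal
      fun_prop
    have hkey : ∫⁻ t in Ioo (0:ℝ) 1, ENNReal.ofReal (Real.exp (-4) * t⁻¹) = ⊤ := by
      by_contra hne
      have hlt : ∫⁻ t in Ioo (0:ℝ) 1, ENNReal.ofReal (Real.exp (-4) * t⁻¹) < ⊤ :=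
        lt_top_iff_ne_top.2 hne
      set f := fun t : ℝ => Real.exp (-4) * t⁻¹ with hf
      have hmf : AEStronglyMeasurable f (volume.restrict (Ioo (0:ℝ) 1)) :=
        (measurable_const.mul measurable_inv).aestronglyMeasurable
      have hnnf : 0 ≤ᵐ[volume.restrict (Ioo (0:ℝ) 1)] f := by
        filter_upwards [ae_restrict_mem measurableSet_Ioo] with t ht
        have := ht.1
        positivity
      have hint : IntegrableOn f (Ioo (0:ℝ) 1) :=
        ⟨hmf, (hasFiniteIntegral_iff_ofReal hnnf).2 hlt⟩
      have hint2 : IntegrableOn (fun t : ℝ => t⁻¹) (Ioo (0:ℝ) 1) := by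
        have h := hint.const_mul (Real.exp 4)
        have heq : (fun t : ℝ => Real.exp 4 * (Real.exp (-4) * t⁻¹)) = fun t : ℝ => t⁻¹ := by
          funext t
          rw [← mul_assoc, ← Real.exp_add]
          norm_num
        rwa [heq] at h
      have hint3 : IntervalIntegrable (fun t : ℝ => t⁻¹) volume 0 1 :=
        (intervalIntegrable_iff_integrableOn_Ioc_of_le (by norm_num)).2
          ((integrableOn_Ioc_iff_integrableOn_Ioo (by simp)).2 hint2)
      rcases intervalIntegrable_inv_iff.mp hint3 with h | h
      · norm_num at h
      · exact h (Set.left_mem_uIcc (a := (0:ℝ)) (b := 1))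
    calc (⊤ : ENNReal) = ∫⁻ t in Ioo (0:ℝ) 1, ENNReal.ofReal (Real.exp (-4) * t⁻¹) := hkey.symm
      _ ≤ ∫⁻ t in Ioo (0:ℝ) 1, ENNReal.ofReal (1 / (Real.sinh t * Real.cosh t ^ 2)) := by
          apply setLIntegral_mono hg_meas
          intro t ht
          apply ENNReal.ofReal_le_ofReal
          have ht0 := ht.1
          have ht1 := ht.2
          have hs : 0 < Real.sinh t := Real.sinh_pos_iff.2 ht0
          have hcp : 0 < Real.cosh t := Real.cosh_pos t
          have h1 : Real.sinh t * Real.cosh t ^ 2 ≤ t * Real.exp 4 := by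
            have hs1 : Real.sinh t ≤ t * Real.exp 2 := by
              calc Real.sinh t ≤ t * Real.exp (2*t) := my_sinh_le_mul_exp ht0.le
              _ ≤ t * Real.exp 2 := by
                  have := Real.exp_le_exp.2 (by linarith : 2*t ≤ 2)
                  nlinarith
            have hc1 : Real.cosh t ≤ Real.exp 1 := by
              calc Real.cosh t ≤ Real.exp t := my_cosh_le_exp ht0.le
              _ ≤ Real.exp 1 := Real.exp_le_exp.2 ht1.le
            have he : Real.exp 2 * (Real.exp 1 * Real.exp 1) = Real.exp 4 := by
              rw [← Real.exp_add, ← Real.exp_add]; norm_num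
            nlinarith [Real.exp_pos 2, Real.exp_pos 1, mul_le_mul hc1 hc1 hcp.le (Real.exp_pos 1).le]
          have h2 : Real.exp (-4) * t⁻¹ = 1 / (t * Real.exp 4) := by
            rw [Real.exp_neg]
            field_simp
          rw [h2]
          apply one_div_le_one_div_of_le (by positivity) h1
      _ ≤ ∫⁻ t in Ioi (0:ℝ), ENNReal.ofReal (1 / (Real.sinh t * Real.cosh t ^ 2)) :=
          lintegral_mono_set Ioo_subset_Ioi_self
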